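/- For any complex matrix ρ on ℂ^{dA} ⊗ ℂ^{dB}, the universal state inverter can be written as a sum over two-qubit subspaces: ρ̃ = Σ_{i<i'} Σ_{j<j'} S_{(i,i',j,j')} · (Q_{(i,i',j,j')} ρ Q_{(i,i',j,j')})̄ · S_{(i,i',j,j')}, where the sum runs over all pairs i < i' in Fin dA and j < j' in Fin dB, X̄ denotes entrywise complex conjugation in the computational basis, Q_{(i,i',j,j')} = (|i⟩⟨i| + |i'⟩⟨i'|) ⊗ (|j⟩⟨j| + |j'⟩⟨j'|), and S_{(i,i',j,j')} = σ_y^{(ii')} ⊗ σ_y^{(jj')} with σ_y^{(kk')} = i|k'⟩⟨k| − i|k⟩⟨k'| the Pauli-y operator embedded on the span of the computational basis vectors |k⟩, |k'⟩. -/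

import Mathlib

open Matrix Kronecker
open scoped ComplexOrder

noncomputable section

/-- Partial trace over the second factor. -/
def ptraceA {dA dB : ℕ} (ρ : Matrix (Fin dA × Fin dB) (Fin dA × Fin dB) ℂ) :
    Matrix (Fin dA) (Fin dA) ℂ :=
  Matrix.of fun i i' => ∑ j, ρ (i, j) (i', j)

/-- Partial trace over the first factor. -/
def ptraceB {dA dB : ℕ} (ρ : Matrix (Fin dA × Fin dB) (Fin dA × Fin dB) ℂ) :
    Matrix (Fin dB) (Fin dB) ℂ :=
  Matrix.of fun j j' => ∑ i, ρ (i, j) (i, j')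

/-- The universal state inverter ρ ↦ ρ̃. -/
def inverter {dA dB : ℕ} (ρ : Matrix (Fin dA × Fin dB) (Fin dA × Fin dB) ℂ) :
    Matrix (Fin dA × Fin dB) (Fin dA × Fin dB) ℂ :=
  (Matrix.trace ρᴴ) • (1 : Matrix (Fin dA × Fin dB) (Fin dA × Fin dB) ℂ)
    - (ptraceA ρ)ᴴ ⊗ₖ (1 : Matrix (Fin dB) (Fin dB) ℂ)
    - (1 : Matrix (Fin dA) (Fin dA) ℂ) ⊗ₖ (ptraceB ρ)ᴴ
    + ρᴴ

/-- The rank-one projector |ψ⟩⟨ψ|. -/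
def outer {dA dB : ℕ} (ψ : Fin dA × Fin dB → ℂ) :
    Matrix (Fin dA × Fin dB) (Fin dA × Fin dB) ℂ :=
  Matrix.vecMulVec ψ (star ψ)

/-- A density matrix: positive semidefinite with trace one. -/
def IsDensityMatrix {m : Type*} [Fintype m] [DecidableEq m] (ρ : Matrix m m ℂ) : Prop :=
  ρ.PosSemidef ∧ ρ.trace = 1

/-- The pure-state tangle ⟨ψ| ρ̃_ψ |ψ⟩ with ρ_ψ = |ψ⟩⟨ψ|. -/
def pureTangle {dA dB : ℕ} (ψ : Fin dA × Fin dB → ℂ) : ℝ :=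
  (star ψ ⬝ᵥ (inverter (outer ψ) *ᵥ ψ)).re

/-- The I-tangle: the infimum of Σᵢ pᵢ ⟨ψᵢ| ρ̃ᵢ |ψᵢ⟩ over pure-state decompositions of ρ. -/
def Itangle {dA dB : ℕ} (ρ : Matrix (Fin dA × Fin dB) (Fin dA × Fin dB) ℂ) : ℝ :=
  sInf { t | ∃ (n : ℕ) (p : Fin n → ℝ) (ψ : Fin n → (Fin dA × Fin dB → ℂ)),
    (∀ i, 0 < p i) ∧ (∑ i, p i = 1) ∧ (∀ i, star (ψ i) ⬝ᵥ ψ i = 1) ∧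
    ρ = ∑ i, (p i : ℂ) • outer (ψ i) ∧
    t = ∑ i, p i * pureTangle (ψ i) }


/-- The projector Q = (|i⟩⟨i| + |i'⟩⟨i'|) ⊗ (|j⟩⟨j| + |j'⟩⟨j'|). -/
def Qproj {dA dB : ℕ} (i i' : Fin dA) (j j' : Fin dB) :
    Matrix (Fin dA × Fin dB) (Fin dA × Fin dB) ℂ :=
  (Matrix.single i i 1 + Matrix.single i' i' 1) ⊗ₖ
    (Matrix.single j j 1 + Matrix.single j' j' 1)

/-- The Pauli-y operator σ_y^{(kk')} = i|k'⟩⟨k| − i|k⟩⟨k'| embedded on span{|k⟩, |k'⟩}. -/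
def sigyEmb {d : ℕ} (k k' : Fin d) : Matrix (Fin d) (Fin d) ℂ :=
  Complex.I • Matrix.single k' k 1 - Complex.I • Matrix.single k k' 1

/-- S_{(i,i',j,j')} = σ_y^{(ii')} ⊗ σ_y^{(jj')}. -/
def Sop {dA dB : ℕ} (i i' : Fin dA) (j j' : Fin dB) :
    Matrix (Fin dA × Fin dB) (Fin dA × Fin dB) ℂ :=
  sigyEmb i i' ⊗ₖ sigyEmb j j'

lemma sigy_mul_proj {d : ℕ} (k k' : Fin d) :
    sigyEmb k k' * (Matrix.single k k 1 + Matrix.single k' k' 1)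
      = sigyEmb k k' := by
  by_cases h : k = k'
  · subst h; simp [sigyEmb]
  · have h1 : Matrix.single k' k (1:ℂ) * Matrix.single k' k' 1 = 0 :=
      by simp [h]
    have h2 : Matrix.single k k' (1:ℂ) * Matrix.single k k 1 = 0 :=
      by simp [Ne.symm h]
    simp only [sigyEmb, sub_mul, smul_mul_assoc, mul_add,
      Matrix.single_mul_single_same, h1, h2, mul_one, add_zero, zero_add, smul_zero,
      sub_zero, zero_sub]
    abel

lemma proj_mul_sigy {d : ℕ} (k k' : Fin d) :
    (Matrix.single k k 1 + Matrix.single k' k' 1) * sigyEmb k k'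
      = sigyEmb k k' := by
  by_cases h : k = k'
  · subst h; simp [sigyEmb]
  · have h1 : Matrix.single k k (1:ℂ) * Matrix.single k' k 1 = 0 :=
      by simp [h]
    have h2 : Matrix.single k' k' (1:ℂ) * Matrix.single k k' 1 = 0 :=
      by simp [Ne.symm h]
    simp only [sigyEmb, mul_sub, mul_smul_comm, add_mul,
      Matrix.single_mul_single_same, h1, h2, one_mul, add_zero, zero_add, smul_zero,
      sub_zero, zero_sub]

lemma Sop_mul_Qproj {dA dB : ℕ} (i i' : Fin dA) (j j' : Fin dB) :
    Sop i i' j j' * Qproj i i' j j' = Sop i i' j j' := by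
  rw [Sop, Qproj, ← Matrix.mul_kronecker_mul, sigy_mul_proj, sigy_mul_proj]

lemma Qproj_mul_Sop {dA dB : ℕ} (i i' : Fin dA) (j j' : Fin dB) :
    Qproj i i' j j' * Sop i i' j j' = Sop i i' j j' := by
  rw [Sop, Qproj, ← Matrix.mul_kronecker_mul, proj_mul_sigy, proj_mul_sigy]

lemma Qproj_map {dA dB : ℕ} (i i' : Fin dA) (j j' : Fin dB) :
    (Qproj i i' j j').map (starRingEnd ℂ) = Qproj i i' j j' := by
  ext ⟨a, b⟩ ⟨c, e⟩
  simp only [Matrix.map_apply, Qproj, kroneckerMap_apply, Matrix.add_apply,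
    Matrix.single, Matrix.of_apply]
  split_ifs <;> simp

lemma term_simp {dA dB : ℕ} (i i' : Fin dA) (j j' : Fin dB)
    (ρ : Matrix (Fin dA × Fin dB) (Fin dA × Fin dB) ℂ) :
    Sop i i' j j' * (Qproj i i' j j' * ρ * Qproj i i' j j').map (starRingEnd ℂ)
        * Sop i i' j j'
      = Sop i i' j j' * ρ.map (starRingEnd ℂ) * Sop i i' j j' := by
  rw [Matrix.map_mul, Matrix.map_mul, Qproj_map, ← Matrix.mul_assoc, ← Matrix.mul_assoc,
    Sop_mul_Qproj, Matrix.mul_assoc, Matrix.mul_assoc, Qproj_mul_Sop, ← Matrix.mul_assoc]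

lemma sigy_swap {d : ℕ} (k k' : Fin d) : sigyEmb k' k = -sigyEmb k k' := by
  rw [sigyEmb, sigyEmb, neg_sub]

lemma sigy_same {d : ℕ} (k : Fin d) : sigyEmb k k = 0 := sub_self _

lemma Sop_swap_left {dA dB : ℕ} (i i' : Fin dA) (j j' : Fin dB) :
    Sop i' i j j' = -Sop i i' j j' := by
  rw [Sop, Sop, sigy_swap i i']
  ext ⟨a, b⟩ ⟨c, e⟩
  simp [kroneckerMap_apply]

lemma Sop_swap_right {dA dB : ℕ} (i i' : Fin dA) (j j' : Fin dB) :
    Sop i i' j' j = -Sop i i' j j' := by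
  rw [Sop, Sop, sigy_swap j j']
  ext ⟨a, b⟩ ⟨c, e⟩
  simp [kroneckerMap_apply]

lemma Sop_same_left {dA dB : ℕ} (i : Fin dA) (j j' : Fin dB) :
    Sop i i j j' = 0 := by
  rw [Sop, sigy_same]
  ext ⟨a, b⟩ ⟨c, e⟩
  simp [kroneckerMap_apply]

lemma Sop_same_right {dA dB : ℕ} (i i' : Fin dA) (j : Fin dB) :
    Sop i i' j j = 0 := by
  rw [Sop, sigy_same]
  ext ⟨a, b⟩ ⟨c, e⟩
  simp [kroneckerMap_apply]

lemma pair_sum {M : Type*} [AddCommMonoid M] {d : ℕ} (f : Fin d → Fin d → M)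
    (hsym : ∀ a b, f b a = f a b) (hdiag : ∀ a, f a a = 0) :
    (∑ i, ∑ i', if i < i' then f i i' else 0)
      + (∑ i, ∑ i', if i < i' then f i i' else 0) = ∑ i, ∑ i', f i i' := by
  have h2 : (∑ i, ∑ i', if i < i' then f i i' else 0)
      = ∑ i, ∑ i', if i' < i then f i i' else 0 := by
    rw [Finset.sum_comm]
    exact Finset.sum_congr rfl fun i _ => Finset.sum_congr rfl fun i' _ =>
      if_congr Iff.rfl (hsym i i') rfl
  nth_rewrite 2 [h2]
  rw [← Finset.sum_add_distrib]
  refine Finset.sum_congr rfl fun i _ => ?_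
  rw [← Finset.sum_add_distrib]
  refine Finset.sum_congr rfl fun i' _ => ?_
  rcases lt_trichotomy i i' with h | h | h
  · rw [if_pos h, if_neg (asymm h), add_zero]
  · subst h; simp [hdiag]
  · rw [if_neg (asymm h), if_pos h, zero_add]

lemma rot3 {A W Z : Type*} [Fintype A] [Fintype W] [Fintype Z] {M : Type*} [AddCommMonoid M]
    (f : A → W → Z → M) :
    (∑ a, ∑ w, ∑ z, f a w z) = ∑ w, ∑ z, ∑ a, f a w z := by
  rw [Finset.sum_comm]
  exact Finset.sum_congr rfl fun w _ => Finset.sum_comm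

lemma sixswap {A B C D W Z : Type*} [Fintype A] [Fintype B] [Fintype C] [Fintype D]
    [Fintype W] [Fintype Z] {M : Type*} [AddCommMonoid M] (f : A → B → C → D → W → Z → M) :
    (∑ a, ∑ b, ∑ c, ∑ d, ∑ w, ∑ z, f a b c d w z)
      = ∑ w, ∑ z, ∑ a, ∑ b, ∑ c, ∑ d, f a b c d w z := by
  calc (∑ a, ∑ b, ∑ c, ∑ d, ∑ w, ∑ z, f a b c d w z)
      = ∑ a, ∑ b, ∑ c, ∑ w, ∑ z, ∑ d, f a b c d w z :=
        Finset.sum_congr rfl fun a _ => Finset.sum_congr rfl fun b _ =>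
          Finset.sum_congr rfl fun c _ => rot3 _
    _ = ∑ a, ∑ b, ∑ w, ∑ z, ∑ c, ∑ d, f a b c d w z :=
        Finset.sum_congr rfl fun a _ => Finset.sum_congr rfl fun b _ => rot3 _
    _ = ∑ a, ∑ w, ∑ z, ∑ b, ∑ c, ∑ d, f a b c d w z :=
        Finset.sum_congr rfl fun a _ => rot3 _
    _ = ∑ w, ∑ z, ∑ a, ∑ b, ∑ c, ∑ d, f a b c d w z := rot3 _

lemma SMS_entry {dA dB : ℕ} (i i' : Fin dA) (j j' : Fin dB)
    (M : Matrix (Fin dA × Fin dB) (Fin dA × Fin dB) ℂ) (x y : Fin dA × Fin dB) :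
    (Sop i i' j j' * M * Sop i i' j j') x y
      = ∑ w : Fin dA × Fin dB, ∑ z : Fin dA × Fin dB,
          (sigyEmb i i' x.1 w.1 * sigyEmb i i' z.1 y.1)
            * ((sigyEmb j j' x.2 w.2 * sigyEmb j j' z.2 y.2) * M w z) := by
  simp only [Matrix.mul_apply, Sop, kroneckerMap_apply, Finset.sum_mul]
  rw [Finset.sum_comm]
  exact Finset.sum_congr rfl fun w _ => Finset.sum_congr rfl fun z _ => by ring

lemma sigy_apply {d : ℕ} (k k' p q : Fin d) :
    sigyEmb k k' p q = Complex.I * ((if p = k' ∧ q = k then 1 else 0)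
      - (if p = k ∧ q = k' then 1 else 0)) := by
  simp only [sigyEmb, Matrix.sub_apply, Matrix.smul_apply, Matrix.single, Matrix.of_apply,
    smul_eq_mul, mul_sub, mul_ite, mul_one, mul_zero]
  congr 2 <;> simp [and_comm, eq_comm]

lemma dsum0 {d : ℕ} (a b c e : Fin d) (h : ¬(a = c ∧ b = e)) :
    (∑ i : Fin d, ∑ i' : Fin d,
      (if a = i' ∧ b = i then (1:ℂ) else 0) * (if c = i' ∧ e = i then 1 else 0)) = 0 := by
  refine Finset.sum_eq_zero fun i _ => Finset.sum_eq_zero fun i' _ => ?_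
  by_cases h1 : a = i' ∧ b = i
  · have h2 : ¬(c = i' ∧ e = i) :=
      fun h2 => h ⟨h1.1.trans h2.1.symm, h1.2.trans h2.2.symm⟩
    rw [if_neg h2, mul_zero]
  · rw [if_neg h1, zero_mul]

lemma dsum {d : ℕ} (a b c e : Fin d) :
    (∑ i : Fin d, ∑ i' : Fin d,
      (if a = i' ∧ b = i then (1:ℂ) else 0) * (if c = i' ∧ e = i then 1 else 0))
      = (if a = c then 1 else 0) * (if b = e then 1 else 0) := by
  by_cases hac : a = c
  · by_cases hbe : b = e
    · subst_vars; simp [ite_and, Finset.sum_ite_eq, Finset.sum_ite_eq', eq_comm]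
    · rw [dsum0 a b c e (fun h => hbe h.2), if_neg hbe, mul_zero]
  · rw [dsum0 a b c e (fun h => hac h.1), if_neg hac, zero_mul]

lemma dsum2_0 {d : ℕ} (a b c e : Fin d) (h : ¬(a = e ∧ b = c)) :
    (∑ i : Fin d, ∑ i' : Fin d,
      (if a = i' ∧ b = i then (1:ℂ) else 0) * (if c = i ∧ e = i' then 1 else 0)) = 0 := by
  refine Finset.sum_eq_zero fun i _ => Finset.sum_eq_zero fun i' _ => ?_
  by_cases h1 : a = i' ∧ b = i
  · have h2 : ¬(c = i ∧ e = i') :=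
      fun h2 => h ⟨h1.1.trans h2.2.symm, h1.2.trans h2.1.symm⟩
    rw [if_neg h2, mul_zero]
  · rw [if_neg h1, zero_mul]

lemma dsum2 {d : ℕ} (a b c e : Fin d) :
    (∑ i : Fin d, ∑ i' : Fin d,
      (if a = i' ∧ b = i then (1:ℂ) else 0) * (if c = i ∧ e = i' then 1 else 0))
      = (if a = e then 1 else 0) * (if b = c then 1 else 0) := by
  by_cases hae : a = e
  · by_cases hbc : b = c
    · subst_vars; simp [ite_and, Finset.sum_ite_eq, Finset.sum_ite_eq', eq_comm]
    · rw [dsum2_0 a b c e (fun h => hbc h.2), if_neg hbc, mul_zero]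
  · rw [dsum2_0 a b c e (fun h => hae h.1), if_neg hae, zero_mul]

lemma dsum3 {d : ℕ} (a b c e : Fin d) :
    (∑ i : Fin d, ∑ i' : Fin d,
      (if a = i ∧ b = i' then (1:ℂ) else 0) * (if c = i' ∧ e = i then 1 else 0))
      = (if a = e then 1 else 0) * (if b = c then 1 else 0) := by
  rw [Finset.sum_comm]
  exact dsum2 a b c e

lemma dsum4 {d : ℕ} (a b c e : Fin d) :
    (∑ i : Fin d, ∑ i' : Fin d,
      (if a = i ∧ b = i' then (1:ℂ) else 0) * (if c = i ∧ e = i' then 1 else 0))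
      = (if a = c then 1 else 0) * (if b = e then 1 else 0) := by
  rw [Finset.sum_comm]
  exact dsum a b c e

lemma Ksum {d : ℕ} (p u u' r : Fin d) :
    (∑ i : Fin d, ∑ i' : Fin d, sigyEmb i i' p u * sigyEmb i i' u' r)
      = 2 * ((if p = r then 1 else 0) * (if u = u' then 1 else 0)
          - (if p = u' then 1 else 0) * (if u = r then 1 else 0)) := by
  simp only [sigy_apply]
  have : ∀ i i' : Fin d,
      Complex.I * ((if p = i' ∧ u = i then 1 else 0) - (if p = i ∧ u = i' then 1 else 0))
        * (Complex.I * ((if u' = i' ∧ r = i then 1 else 0) - (if u' = i ∧ r = i' then 1 else 0)))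
      = -(((if p = i' ∧ u = i then (1:ℂ) else 0) * (if u' = i' ∧ r = i then 1 else 0))
          - ((if p = i' ∧ u = i then (1:ℂ) else 0) * (if u' = i ∧ r = i' then 1 else 0))
          - ((if p = i ∧ u = i' then (1:ℂ) else 0) * (if u' = i' ∧ r = i then 1 else 0))
          + ((if p = i ∧ u = i' then (1:ℂ) else 0) * (if u' = i ∧ r = i' then 1 else 0))) := by
    intro i i'
    ring_nf
    rw [Complex.I_sq]
    ring
  simp only [this, Finset.sum_neg_distrib, Finset.sum_add_distrib, Finset.sum_sub_distrib]
  rw [dsum p u u' r, dsum2 p u u' r, dsum3 p u u' r, dsum4 p u u' r]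
  ring


lemma factor4 {dA dB : ℕ} (A : Fin dA → Fin dA → ℂ) (B : Fin dB → Fin dB → ℂ) (m : ℂ) :
    (∑ i, ∑ i', ∑ j, ∑ j', A i i' * (B j j' * m))
      = (∑ i, ∑ i', A i i') * ((∑ j, ∑ j', B j j') * m) := by
  simp only [← Finset.mul_sum, ← Finset.sum_mul]

lemma final {dA dB : ℕ} (ρ : Matrix (Fin dA × Fin dB) (Fin dA × Fin dB) ℂ)
    (p r : Fin dA) (q s : Fin dB) :
    (∑ w : Fin dA × Fin dB, ∑ z : Fin dA × Fin dB,
          (2 * ((if p = r then 1 else 0) * (if w.1 = z.1 then 1 else 0)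
              - (if p = z.1 then 1 else 0) * (if w.1 = r then 1 else 0)))
            * ((2 * ((if q = s then 1 else 0) * (if w.2 = z.2 then 1 else 0)
              - (if q = z.2 then 1 else 0) * (if w.2 = s then 1 else 0)))
              * ρ.map (starRingEnd ℂ) w z))
      = ((4 : ℂ) • inverter ρ) (p, q) (r, s) := by
  simp only [Fintype.sum_prod_type, Matrix.map_apply]
  simp only [mul_sub, sub_mul, mul_ite, ite_mul, one_mul, mul_one, zero_mul, mul_zero,
    Finset.sum_sub_distrib, Finset.sum_ite_eq, Finset.sum_ite_eq', Finset.mem_univ, if_true,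
    Finset.sum_ite_irrel, Finset.sum_const_zero]
  simp only [inverter, Matrix.smul_apply, Matrix.add_apply, Matrix.sub_apply,
    Matrix.one_apply, kroneckerMap_apply, Matrix.conjTranspose_apply, Matrix.trace,
    Matrix.diag, Fintype.sum_prod_type, map_sum, ptraceA, ptraceB, Matrix.of_apply,
    smul_eq_mul, Prod.mk.injEq]
  simp only [starRingEnd_apply, star_sum, show ∀ x : ℂ, 2 * (2 * x) = 4 * x from fun x => by ring,
    ← Finset.mul_sum]
  by_cases hpr : p = r <;> by_cases hqs : q = s <;>
    simp [hpr, hqs] <;> ring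

lemma key {dA dB : ℕ} (ρ : Matrix (Fin dA × Fin dB) (Fin dA × Fin dB) ℂ) :
    (∑ i : Fin dA, ∑ i' : Fin dA, ∑ j : Fin dB, ∑ j' : Fin dB,
        Sop i i' j j' * ρ.map (starRingEnd ℂ) * Sop i i' j j')
      = (4 : ℂ) • inverter ρ := by
  ext x y
  obtain ⟨p, q⟩ := x
  obtain ⟨r, s⟩ := y
  simp only [Matrix.sum_apply]
  calc (∑ i, ∑ i', ∑ j, ∑ j',
        (Sop i i' j j' * ρ.map (starRingEnd ℂ) * Sop i i' j j') (p, q) (r, s))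
      = ∑ i, ∑ i', ∑ j, ∑ j', ∑ w : Fin dA × Fin dB, ∑ z : Fin dA × Fin dB,
          (sigyEmb i i' p w.1 * sigyEmb i i' z.1 r)
            * ((sigyEmb j j' q w.2 * sigyEmb j j' z.2 s) * ρ.map (starRingEnd ℂ) w z) :=
        Finset.sum_congr rfl fun i _ => Finset.sum_congr rfl fun i' _ =>
          Finset.sum_congr rfl fun j _ => Finset.sum_congr rfl fun j' _ =>
            SMS_entry i i' j j' _ (p, q) (r, s)
    _ = ∑ w : Fin dA × Fin dB, ∑ z : Fin dA × Fin dB, ∑ i, ∑ i', ∑ j, ∑ j',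
          (sigyEmb i i' p w.1 * sigyEmb i i' z.1 r)
            * ((sigyEmb j j' q w.2 * sigyEmb j j' z.2 s) * ρ.map (starRingEnd ℂ) w z) :=
        sixswap _
    _ = ∑ w : Fin dA × Fin dB, ∑ z : Fin dA × Fin dB,
          (∑ i, ∑ i', sigyEmb i i' p w.1 * sigyEmb i i' z.1 r)
            * ((∑ j, ∑ j', sigyEmb j j' q w.2 * sigyEmb j j' z.2 s)
              * ρ.map (starRingEnd ℂ) w z) :=
        Finset.sum_congr rfl fun w _ => Finset.sum_congr rfl fun z _ => factor4 _ _ _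
    _ = ∑ w : Fin dA × Fin dB, ∑ z : Fin dA × Fin dB,
          (2 * ((if p = r then 1 else 0) * (if w.1 = z.1 then 1 else 0)
              - (if p = z.1 then 1 else 0) * (if w.1 = r then 1 else 0)))
            * ((2 * ((if q = s then 1 else 0) * (if w.2 = z.2 then 1 else 0)
              - (if q = z.2 then 1 else 0) * (if w.2 = s then 1 else 0)))
              * ρ.map (starRingEnd ℂ) w z) :=
        Finset.sum_congr rfl fun w _ => Finset.sum_congr rfl fun z _ => by
          rw [Ksum, Ksum]
    _ = ((4 : ℂ) • inverter ρ) (p, q) (r, s) := final ρ p r q s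

/-- The universal state inverter as a sum of two-qubit spin flips over all two-qubit
subspaces: ρ̃ = Σ_{i<i'} Σ_{j<j'} S (Q ρ Q)̄ S. -/
theorem inverter_eq_sum_spin_flips {dA dB : ℕ}
    (ρ : Matrix (Fin dA × Fin dB) (Fin dA × Fin dB) ℂ) :
    inverter ρ = ∑ i : Fin dA, ∑ i' : Fin dA, ∑ j : Fin dB, ∑ j' : Fin dB,
      if i < i' ∧ j < j' then
        Sop i i' j j' * (Qproj i i' j j' * ρ * Qproj i i' j j').map (starRingEnd ℂ)
          * Sop i i' j j'
      else 0 := by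
  have hF_swapL : ∀ (i i' : Fin dA) (j j' : Fin dB),
      Sop i' i j j' * ρ.map (starRingEnd ℂ) * Sop i' i j j'
        = Sop i i' j j' * ρ.map (starRingEnd ℂ) * Sop i i' j j' := by
    intro i i' j j'
    rw [Sop_swap_left, neg_mul, neg_mul, mul_neg, neg_neg]
  have hF_swapR : ∀ (i i' : Fin dA) (j j' : Fin dB),
      Sop i i' j' j * ρ.map (starRingEnd ℂ) * Sop i i' j' j
        = Sop i i' j j' * ρ.map (starRingEnd ℂ) * Sop i i' j j' := by
    intro i i' j j'
    rw [Sop_swap_right, neg_mul, neg_mul, mul_neg, neg_neg]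
  set F : Fin dA → Fin dA → Fin dB → Fin dB → Matrix (Fin dA × Fin dB) (Fin dA × Fin dB) ℂ :=
    fun i i' j j' => Sop i i' j j' * ρ.map (starRingEnd ℂ) * Sop i i' j j' with hF
  set G : Fin dA → Fin dA → Matrix (Fin dA × Fin dB) (Fin dA × Fin dB) ℂ :=
    fun i i' => ∑ j, ∑ j', if j < j' then F i i' j j' else 0 with hG
  have hRHS : (∑ i : Fin dA, ∑ i' : Fin dA, ∑ j : Fin dB, ∑ j' : Fin dB,
      if i < i' ∧ j < j' then
        Sop i i' j j' * (Qproj i i' j j' * ρ * Qproj i i' j j').map (starRingEnd ℂ)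
          * Sop i i' j j'
      else 0) = ∑ i, ∑ i', if i < i' then G i i' else 0 := by
    simp only [term_simp, ite_and, hG, ← hF, Finset.sum_ite_irrel, Finset.sum_const_zero]; rfl
  rw [hRHS]
  set B := ∑ i, ∑ i', if i < i' then G i i' else 0 with hB
  have hGsym : ∀ a b, G b a = G a b := by
    intro a b
    simp only [hG]
    exact Finset.sum_congr rfl fun j _ => Finset.sum_congr rfl fun j' _ =>
      if_congr Iff.rfl (hF_swapL a b j j') rfl
  have hGdiag : ∀ a, G a a = 0 := by
    intro a
    simp only [hG]
    refine Finset.sum_eq_zero fun j _ => Finset.sum_eq_zero fun j' _ => ?_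
    simp [hF, Sop_same_left]
  have h2 : B + B = ∑ i, ∑ i', G i i' := pair_sum G hGsym hGdiag
  have h3 : ∀ i i', G i i' + G i i' = ∑ j, ∑ j', F i i' j j' := by
    intro i i'
    refine pair_sum (fun j j' => F i i' j j') (fun a b => hF_swapR i i' a b) (fun a => ?_)
    simp [hF, Sop_same_right]
  have h4 : (B + B) + (B + B) = (4 : ℂ) • inverter ρ := by
    rw [h2, ← Finset.sum_add_distrib]
    rw [← key ρ]
    refine Finset.sum_congr rfl fun i _ => ?_
    rw [← Finset.sum_add_distrib]
    exact Finset.sum_congr rfl fun i' _ => h3 i i'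
  have h5 : (4 : ℂ) • B = (4 : ℂ) • inverter ρ := by
    rw [← h4, show (4 : ℂ) = 2 + 2 by norm_num, add_smul, two_smul]
  have := smul_right_injective (Matrix (Fin dA × Fin dB) (Fin dA × Fin dB) ℂ)
    (show (4 : ℂ) ≠ 0 by norm_num) h5
  exact this.symm
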